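/- Let A, B, Q, R, x_ref ∈ ℝ with B > 0, Q > 0, R > 0, A ≠ 1, x_ref ≠ 0. Define S = (−2R(1+A)/B, 2R(1−A)/B) and J_ss(Θ) = (Q + Θ²/(2R)) ((A−1)x_ref/(1 − A − BΘ/(2R)))². If BQ/(A−1) ∉ S, then J_ss is strictly increasing on S, and hence inf over S is approached at the left endpoint Θ = −2R(1+A)/B. -/

import Mathlib

open Set Filter Topology

/-- Derivative of the steady-state cost. -/
lemma stmt8_hasDeriv (A B Q R xref : ℝ) (hR : 0 < R) {Θ : ℝ}
    (hd : 0 < 1 - A - B * Θ / (2 * R)) :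
    HasDerivAt (fun Θ : ℝ => (Q + Θ ^ 2 / (2 * R)) *
        ((A - 1) * xref / (1 - A - B * Θ / (2 * R))) ^ 2)
      ((A - 1) ^ 2 * xref ^ 2 * ((1 - A) * Θ + B * Q) /
        (R * (1 - A - B * Θ / (2 * R)) ^ 3)) Θ := by
  have hR' : (2 * R) ≠ 0 := by positivity
  have hdne : (1 - A - B * Θ / (2 * R)) ≠ 0 := ne_of_gt hd
  have hfun : (fun Θ : ℝ => (Q + Θ ^ 2 / (2 * R)) *
        ((A - 1) * xref / (1 - A - B * Θ / (2 * R))) ^ 2)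
      = fun Θ : ℝ => ((Q + Θ ^ 2 / (2 * R)) * ((A - 1) * xref) ^ 2) /
        ((1 - A - B * Θ / (2 * R)) ^ 2) := by
    funext t
    rw [div_pow]
    ring
  rw [hfun]
  have h1 : HasDerivAt (fun Θ : ℝ => (Q + Θ ^ 2 / (2 * R)) * ((A - 1) * xref) ^ 2)
      ((2 * Θ / (2 * R)) * ((A - 1) * xref) ^ 2) Θ := by
    have := (((hasDerivAt_pow 2 Θ).div_const (2 * R)).const_add Q).mul_const
      (((A - 1) * xref) ^ 2)
    simpa using this
  have hi : HasDerivAt (fun Θ : ℝ => 1 - A - B * Θ / (2 * R)) (-(B / (2 * R))) Θ := by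
    have := (((hasDerivAt_id Θ).const_mul B).div_const (2 * R)).const_sub (1 - A)
    simpa [mul_comm] using this
  have h2 : HasDerivAt (fun Θ : ℝ => (1 - A - B * Θ / (2 * R)) ^ 2)
      (2 * (1 - A - B * Θ / (2 * R)) ^ 1 * (-(B / (2 * R)))) Θ := by
    simpa using hi.fun_pow 2
  have h3 := h1.fun_div h2 (pow_ne_zero 2 hdne)
  refine h3.congr_deriv (Eq.symm ?_)
  rw [div_eq_div_iff (mul_ne_zero (ne_of_gt hR) (pow_ne_zero 3 hdne))
    (pow_ne_zero 2 (pow_ne_zero 2 hdne))]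
  field_simp
  ring

theorem stmt8 (A B Q R xref : ℝ) (hB : 0 < B) (hQ : 0 < Q) (hR : 0 < R)
    (hA1 : A ≠ 1) (hx : xref ≠ 0)
    (hout : B * Q / (A - 1) ∉ Set.Ioo (-(2 * R * (1 + A)) / B) (2 * R * (1 - A) / B)) :
    StrictMonoOn
      (fun Θ : ℝ => (Q + Θ ^ 2 / (2 * R)) *
        ((A - 1) * xref / (1 - A - B * Θ / (2 * R))) ^ 2)
      (Set.Ioo (-(2 * R * (1 + A)) / B) (2 * R * (1 - A) / B)) ∧
    IsGLB
      ((fun Θ : ℝ => (Q + Θ ^ 2 / (2 * R)) *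
        ((A - 1) * xref / (1 - A - B * Θ / (2 * R))) ^ 2) ''
        Set.Ioo (-(2 * R * (1 + A)) / B) (2 * R * (1 - A) / B))
      ((fun Θ : ℝ => (Q + Θ ^ 2 / (2 * R)) *
        ((A - 1) * xref / (1 - A - B * Θ / (2 * R))) ^ 2)
        (-(2 * R * (1 + A)) / B)) := by
  set f : ℝ → ℝ := fun Θ : ℝ => (Q + Θ ^ 2 / (2 * R)) *
      ((A - 1) * xref / (1 - A - B * Θ / (2 * R))) ^ 2 with hf
  set l : ℝ := -(2 * R * (1 + A)) / B with hl
  set r : ℝ := 2 * R * (1 - A) / B with hr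
  have hR2 : (0:ℝ) < 2 * R := by positivity
  have hlr : l < r := by
    rw [hl, hr, div_lt_div_iff₀ hB hB]
    nlinarith
  -- denominator positive on Ico l r
  have hd : ∀ Θ ∈ Ico l r, 0 < 1 - A - B * Θ / (2 * R) := by
    intro Θ hΘ
    have h2 : Θ < r := hΘ.2
    rw [hr, lt_div_iff₀ hB] at h2
    have : B * Θ / (2 * R) < 1 - A := by
      rw [div_lt_iff₀ hR2]; nlinarith
    linarith
  -- sign of affine factor on Ioo l r
  have hsign : ∀ Θ ∈ Ioo l r, 0 < (1 - A) * Θ + B * Q := by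
    intro Θ hΘ
    rcases lt_or_gt_of_ne hA1 with hA | hA
    · -- A < 1 : critical point ≤ l
      have hcrit : B * Q / (A - 1) ≤ l := by
        by_contra h
        push_neg at h
        have hA' : A - 1 < 0 := by linarith
        have hneg : B * Q / (A - 1) < 0 := div_neg_of_pos_of_neg (by positivity) hA'
        have hr0 : (0:ℝ) < r := by
          rw [hr]; apply div_pos _ hB; nlinarith
        exact hout ⟨h, by linarith⟩
      have h1 : B * Q / (A - 1) < Θ := lt_of_le_of_lt hcrit hΘ.1
      rw [div_lt_iff_of_neg (show A - 1 < 0 by linarith)] at h1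
      nlinarith
    · -- A > 1 : critical point ≥ r
      have hlneg : l < B * Q / (A - 1) := by
        have h1 : l < 0 := by
          rw [hl]
          apply div_neg_of_neg_of_pos _ hB
          nlinarith
        have h2 : 0 < B * Q / (A - 1) := by
          apply div_pos (by positivity); linarith
        linarith
      have hcrit : r ≤ B * Q / (A - 1) := by
        by_contra h
        push_neg at h
        exact hout ⟨hlneg, h⟩
      have h1 : Θ < B * Q / (A - 1) := lt_of_lt_of_le hΘ.2 hcrit
      rw [lt_div_iff₀ (show (0:ℝ) < A - 1 by linarith)] at h1
      nlinarith
  have hA2 : (A - 1) ^ 2 * xref ^ 2 > 0 := by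
    have : A - 1 ≠ 0 := sub_ne_zero.mpr hA1
    positivity
  -- strict monotonicity on Ico l r
  have hmono : StrictMonoOn f (Ico l r) := by
    apply strictMonoOn_of_deriv_pos (convex_Ico l r)
    · intro Θ hΘ
      exact (stmt8_hasDeriv A B Q R xref hR (hd Θ hΘ)).continuousAt.continuousWithinAt
    · intro Θ hΘ
      rw [interior_Ico] at hΘ
      rw [(stmt8_hasDeriv A B Q R xref hR (hd Θ (Ioo_subset_Ico_self hΘ))).deriv]
      have h1 := hsign Θ hΘ
      have h2 := hd Θ (Ioo_subset_Ico_self hΘ)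
      positivity
  refine ⟨hmono.mono Ioo_subset_Ico_self, ?_⟩
  constructor
  · rintro _ ⟨Θ, hΘ, rfl⟩
    exact (hmono (left_mem_Ico.mpr hlr) (Ioo_subset_Ico_self hΘ) hΘ.1).le
  · intro b hb
    have hcont : Tendsto f (𝓝[>] l) (𝓝 (f l)) :=
      ((stmt8_hasDeriv A B Q R xref hR
        (hd l (left_mem_Ico.mpr hlr))).continuousAt).continuousWithinAt
    have hmem : Ioo l r ∈ 𝓝[>] l := Ioo_mem_nhdsGT hlr
    exact ge_of_tendsto hcont (eventually_of_mem hmem fun Θ hΘ => hb ⟨Θ, hΘ, rfl⟩)
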